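/- arXiv:1404.4148 — 3 statements merged into one kernel-verified Lean document; each statement's English description precedes it below -/
import Mathlib

section
/- Let ℋ be the Hilbert space of square-integrable functions x : [0,T] → ℝ^d with inner product ⟨x,y⟩ = x(T)*Q̄y(T) + ∫₀ᵀ x(s)*Q y(s) ds, where Q and Q̄ are symmetric positive definite. Suppose a map Φ : ℋ → ℋ satisfies ‖Φ(x) − Φ(y)‖² ≤ N(S)‖Φ(x)−Φ(y)‖·‖x−y‖ + √T‖φ‖_T (‖Φ(x)−Φ(y)‖ + N(S)‖x−y‖)‖ℬQ^{-1/2}‖·‖x−y‖ for all x,y ∈ ℋ, with constants N(S), ‖φ‖_T, ‖ℬQ^{-1/2}‖ ≥ 0. If (1 + √T‖φ‖_T‖ℬQ^{-1/2}‖)(1 + N(S)) < 2, then Φ is a strict contraction on ℋ and hence has a unique fixed point. -/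
/-- Abstract fixed point step of Section 4: if `Φ : ℋ → ℋ` on a (nonempty, complete)
Hilbert space satisfies
`‖Φx − Φy‖² ≤ N(S)‖Φx−Φy‖‖x−y‖ + √T‖φ‖_T(‖Φx−Φy‖ + N(S)‖x−y‖)‖ℬQ^{-1/2}‖‖x−y‖`
and `(1 + √T‖φ‖_T‖ℬQ^{-1/2}‖)(1 + N(S)) < 2`, then `Φ` is a strict contraction and
has a unique fixed point. -/
theorem stmt7 {H : Type*} [NormedAddCommGroup H] [InnerProductSpace ℝ H]
    [CompleteSpace H] [Nonempty H]
    (Φ : H → H) (NS phiT BQ T : ℝ)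
    (hNS : 0 ≤ NS) (hphiT : 0 ≤ phiT) (hBQ : 0 ≤ BQ) (hT : 0 ≤ T)
    (h : ∀ x y : H, ‖Φ x - Φ y‖ ^ 2 ≤ NS * ‖Φ x - Φ y‖ * ‖x - y‖
        + Real.sqrt T * phiT * (‖Φ x - Φ y‖ + NS * ‖x - y‖) * BQ * ‖x - y‖)
    (hcond : (1 + Real.sqrt T * phiT * BQ) * (1 + NS) < 2) :
    (∃ L : ℝ, 0 ≤ L ∧ L < 1 ∧ ∀ x y : H, ‖Φ x - Φ y‖ ≤ L * ‖x - y‖) ∧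
      ∃! z : H, Φ z = z := by
  set c : ℝ := Real.sqrt T * phiT * BQ with hc
  have hc0 : 0 ≤ c := by positivity
  set D : ℝ := Real.sqrt ((NS + c) ^ 2 + 4 * c * NS) with hD
  have hDnn : 0 ≤ (NS + c) ^ 2 + 4 * c * NS := by positivity
  have hD0 : 0 ≤ D := Real.sqrt_nonneg _
  have hDsq : D ^ 2 = (NS + c) ^ 2 + 4 * c * NS := Real.sq_sqrt hDnn
  have hDge : NS + c ≤ D := by
    have := Real.sqrt_le_sqrt (show (NS + c) ^ 2 ≤ (NS + c) ^ 2 + 4 * c * NS by nlinarith)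
    calc NS + c = Real.sqrt ((NS + c) ^ 2) := by
          rw [Real.sqrt_sq (by positivity)]
      _ ≤ D := this
  set L : ℝ := ((NS + c) + D) / 2 with hL
  have hL0 : 0 ≤ L := by positivity
  have hLsq : L ^ 2 = (NS + c) * L + c * NS := by
    have : (2 * L) ^ 2 = (NS + c + D) ^ 2 := by rw [hL]; ring
    nlinarith [hDsq]
  -- condition implies NS + c + c*NS < 1
  have hsum : NS + c + c * NS < 1 := by nlinarith
  have hL1 : L < 1 := by
    -- D < 2 - (NS + c)
    have h2 : D < 2 - (NS + c) := by
      have h2' : D ^ 2 < (2 - (NS + c)) ^ 2 := by nlinarith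
      nlinarith [hD0]
    rw [hL]; linarith
  have key : ∀ x y : H, ‖Φ x - Φ y‖ ≤ L * ‖x - y‖ := by
    intro x y
    have hxy := h x y
    set a := ‖Φ x - Φ y‖ with ha
    set b := ‖x - y‖ with hb
    have ha0 : 0 ≤ a := norm_nonneg _
    have hb0 : 0 ≤ b := norm_nonneg _
    by_contra hcon
    push_neg at hcon
    have hfac : a + (L - (NS + c)) * b > 0 := by
      have : L - (NS + c) ≥ 0 := by rw [hL]; linarith
      nlinarith
    have hxy2 : a ^ 2 ≤ (NS + c) * a * b + c * NS * b ^ 2 := by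
      rw [hc]; ring_nf; ring_nf at hxy; linarith
    nlinarith [mul_pos (show a - L * b > 0 by linarith) hfac]
  refine ⟨⟨L, hL0, hL1, key⟩, ?_⟩
  have hcontr : ContractingWith (Real.toNNReal L) Φ := by
    constructor
    · exact Real.toNNReal_lt_one.mpr hL1
    · intro x y
      have := key x y
      simp only [edist_dist, dist_eq_norm]
      rw [← ENNReal.ofReal_coe_nnreal]
      rw [← ENNReal.ofReal_mul (by positivity)]
      apply ENNReal.ofReal_le_ofReal
      simpa [Real.coe_toNNReal L hL0] using this
  obtain ⟨z, hz⟩ := hcontr.exists_fixedPoint (Classical.arbitrary H)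
    (by simp [edist_ne_top])
  exact ⟨z, hz.1, fun y hy => hcontr.fixedPoint_unique' hy hz.1⟩
end

section
/- Let a, b ≥ 0 and N, c ≥ 0 satisfy a² ≤ N·a·b + c·(a + N·b)·b. If (1+c)(1+N) < 2 then a ≤ L·b for some constant L < 1 depending only on N and c, namely L = ((N+c) + √((N+c)² + 4cN))/2. -/
/-- Algebraic core of the contraction estimate: if `a² ≤ Nab + c(a + Nb)b` with
`a, b, N, c ≥ 0` and `(1+c)(1+N) < 2`, then `a ≤ L b` with
`L = ((N+c) + √((N+c)² + 4cN))/2 < 1`. -/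
theorem stmt8 (a b N c : ℝ) (ha : 0 ≤ a) (hb : 0 ≤ b) (hN : 0 ≤ N) (hc : 0 ≤ c)
    (h : a ^ 2 ≤ N * a * b + c * (a + N * b) * b)
    (hcond : (1 + c) * (1 + N) < 2) :
    a ≤ ((N + c) + Real.sqrt ((N + c) ^ 2 + 4 * c * N)) / 2 * b ∧
      ((N + c) + Real.sqrt ((N + c) ^ 2 + 4 * c * N)) / 2 < 1 := by
  have hSnn : 0 ≤ Real.sqrt ((N + c) ^ 2 + 4 * c * N) := Real.sqrt_nonneg _
  have hSsq : Real.sqrt ((N + c) ^ 2 + 4 * c * N) ^ 2 = (N + c) ^ 2 + 4 * c * N :=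
    Real.sq_sqrt (by positivity)
  set S := Real.sqrt ((N + c) ^ 2 + 4 * c * N)
  constructor
  · rcases le_or_gt (2 * a - (N + c) * b) 0 with hcase | hcase
    · nlinarith [mul_nonneg hSnn hb]
    · have key : (2 * a - (N + c) * b) ^ 2 ≤ (S * b) ^ 2 := by nlinarith [sq_nonneg b, hSsq, mul_nonneg hc hN]
      nlinarith [mul_nonneg hSnn hb]
  · have h2s : (0:ℝ) < 2 - (N + c) := by nlinarith [sq_nonneg b, hSsq, mul_nonneg hc hN]
    have hlt : S ^ 2 < (2 - (N + c)) ^ 2 := by nlinarith [sq_nonneg b, hSsq, mul_nonneg hc hN]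
    nlinarith [sq_nonneg (S - (2 - (N + c)))]
end

section
/- Let X, Y, x : [0,T] → ℝ^d with X'(t) = 𝒜X(t) − 𝒞Y(t) + ℬx(t), X(0)=0, and −Y'(t) = 𝒜*Y(t) + 𝒬X(t) + 𝒮x(t), Y(T) = Q̄X(T) + S̄x(T). Then the duality identity holds: X(T)*Q̄X(T) + ∫₀ᵀ X(t)*𝒬X(t) dt = −X(T)*S̄x(T) − ∫₀ᵀ [Y(t)*𝒞Y(t) − Y(t)*ℬx(t) + X(t)*𝒮x(t)] dt. -/
open Matrix intervalIntegral

/-- Duality identity for the linear forward-backward ODE system: if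
`X' = 𝒜X − 𝒞Y + ℬx`, `X(0) = 0`, `−Y' = 𝒜*Y + 𝒬X + 𝒮x`, `Y(T) = Q̄X(T) + S̄x(T)`,
then `X(T)*Q̄X(T) + ∫₀ᵀ X*𝒬X = −X(T)*S̄x(T) − ∫₀ᵀ [Y*𝒞Y − Y*ℬx + X*𝒮x]`. -/
theorem stmt10 {d : ℕ} (T : ℝ) (hT : 0 ≤ T)
    (A B C Q S Qbar Sbar : Matrix (Fin d) (Fin d) ℝ)
    (X Y x : ℝ → Fin d → ℝ) (hx : Continuous x)
    (hX : ∀ t, HasDerivAt X (A *ᵥ X t - C *ᵥ Y t + B *ᵥ x t) t)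
    (hX0 : X 0 = 0)
    (hY : ∀ t, HasDerivAt Y (-(Aᵀ *ᵥ Y t + Q *ᵥ X t + S *ᵥ x t)) t)
    (hYT : Y T = Qbar *ᵥ X T + Sbar *ᵥ x T) :
    X T ⬝ᵥ (Qbar *ᵥ X T) + ∫ t in (0:ℝ)..T, X t ⬝ᵥ (Q *ᵥ X t)
      = -(X T ⬝ᵥ (Sbar *ᵥ x T))
        - ∫ t in (0:ℝ)..T,
            (Y t ⬝ᵥ (C *ᵥ Y t) - Y t ⬝ᵥ (B *ᵥ x t) + X t ⬝ᵥ (S *ᵥ x t)) := by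
  have hXc : Continuous X := by
    rw [continuous_iff_continuousAt]; exact fun t => (hX t).continuousAt
  have hYc : Continuous Y := by
    rw [continuous_iff_continuousAt]; exact fun t => (hY t).continuousAt
  -- f t = X t ⬝ᵥ Y t
  set g : ℝ → ℝ := fun t =>
    -(Y t ⬝ᵥ (C *ᵥ Y t) - Y t ⬝ᵥ (B *ᵥ x t) + X t ⬝ᵥ (S *ᵥ x t)) - X t ⬝ᵥ (Q *ᵥ X t)
    with hg
  have hf : ∀ t, HasDerivAt (fun t => X t ⬝ᵥ Y t) (g t) t := by
    intro t
    have h1 : HasDerivAt (fun t => X t ⬝ᵥ Y t)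
        ((A *ᵥ X t - C *ᵥ Y t + B *ᵥ x t) ⬝ᵥ Y t
          + X t ⬝ᵥ (-(Aᵀ *ᵥ Y t + Q *ᵥ X t + S *ᵥ x t))) t := by
      have hXi := hasDerivAt_pi.mp (hX t)
      have hYi := hasDerivAt_pi.mp (hY t)
      simp only [dotProduct, Finset.sum_add_distrib.symm]
      have := HasDerivAt.sum (u := Finset.univ)
        (fun i _ => (hXi i).mul (hYi i))
      rw [show (∑ i, (fun x => X x i) * fun x => Y x i) = fun t => ∑ i, X t i * Y t i from by
        ext s; simp [Finset.sum_apply]] at this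
      convert this using 1
    convert h1 using 1
    have key : ∀ (M : Matrix (Fin d) (Fin d) ℝ) (u v : Fin d → ℝ),
        (M *ᵥ u) ⬝ᵥ v = u ⬝ᵥ (Mᵀ *ᵥ v) := by
      intro M u v
      rw [dotProduct_comm, dotProduct_mulVec, mulVec_transpose, dotProduct_comm]
    simp only [hg, sub_dotProduct, add_dotProduct, dotProduct_neg, dotProduct_add,
      key A (X t) (Y t)]
    rw [dotProduct_comm (C *ᵥ Y t), dotProduct_comm (B *ᵥ x t)]
    ring
  have hgc : Continuous g := by
    apply Continuous.sub
    · apply Continuous.neg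
      exact ((hYc.dotProduct (continuous_const.matrix_mulVec hYc)).sub
        (hYc.dotProduct (continuous_const.matrix_mulVec hx))).add
        (hXc.dotProduct (continuous_const.matrix_mulVec hx))
    · exact hXc.dotProduct (continuous_const.matrix_mulVec hXc)
  have hint : (∫ t in (0:ℝ)..T, g t) = X T ⬝ᵥ Y T - X 0 ⬝ᵥ Y 0 :=
    intervalIntegral.integral_eq_sub_of_hasDerivAt (fun t _ => hf t)
      (hgc.intervalIntegrable 0 T)
  have hI1 : IntervalIntegrable (fun t => X t ⬝ᵥ (Q *ᵥ X t)) MeasureTheory.volume 0 T :=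
    (hXc.dotProduct (continuous_const.matrix_mulVec hXc)).intervalIntegrable 0 T
  have hI2 : IntervalIntegrable
      (fun t => Y t ⬝ᵥ (C *ᵥ Y t) - Y t ⬝ᵥ (B *ᵥ x t) + X t ⬝ᵥ (S *ᵥ x t))
      MeasureTheory.volume 0 T :=
    (((hYc.dotProduct (continuous_const.matrix_mulVec hYc)).sub
      (hYc.dotProduct (continuous_const.matrix_mulVec hx))).add
      (hXc.dotProduct (continuous_const.matrix_mulVec hx))).intervalIntegrable 0 T
  have hsplit : (∫ t in (0:ℝ)..T, g t)
      = -(∫ t in (0:ℝ)..T,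
            (Y t ⬝ᵥ (C *ᵥ Y t) - Y t ⬝ᵥ (B *ᵥ x t) + X t ⬝ᵥ (S *ᵥ x t)))
        - ∫ t in (0:ℝ)..T, X t ⬝ᵥ (Q *ᵥ X t) := by
    have h := intervalIntegral.integral_sub hI2.neg hI1
    simp only [Pi.neg_apply, Pi.sub_apply] at h
    simp only [hg]
    rw [h, intervalIntegral.integral_neg]
  rw [hsplit, hX0, hYT] at hint
  simp only [zero_dotProduct, dotProduct_add, sub_zero] at hint
  linarith
end
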